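/- On a connected locally finite tree with root o and path metric d_w (w > 0 on edges), for each point x of the metric boundary ∂X (completion minus X) there exists an infinite injective path (x_n) converging to x such that x_m is an ancestor of x_n for m ≤ n; in particular d_w(x_n,x_m) = ∑_{k=m}^{n-1} w(x_k,x_{k+1}) for n > m. -/

import Mathlib

open Filter Topology

/-- The `w`-length of a walk in a simple graph. -/
noncomputable def walkLength {X : Type*} {G : SimpleGraph X} (w : X → X → ℝ) {x y : X}
    (q : G.Walk x y) : ℝ :=
  (q.darts.map fun d => w d.toProd.1 d.toProd.2).sum

namespace TBMP
set_option linter.unusedSectionVars false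

lemma list_sum_map_le {α : Type*} {f : α → ℝ} :
    ∀ {l₁ l₂ : List α}, l₁.Nodup → l₁ ⊆ l₂ → (∀ a ∈ l₂, 0 ≤ f a) →
      (l₁.map f).sum ≤ (l₂.map f).sum := by
  intro l₁
  induction l₁ with
  | nil => intro l₂ _ _ hf; exact List.sum_nonneg (by simpa using hf)
  | cons a l ih =>
    intro l₂ hnd hsub hf
    classical
    have ha : a ∈ l₂ := hsub List.mem_cons_self
    have hperm : List.Perm l₂ (a :: l₂.erase a) := List.perm_cons_erase ha
    have hsum : (l₂.map f).sum = f a + ((l₂.erase a).map f).sum := by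
      rw [(hperm.map f).sum_eq]; simp
    rw [hsum, List.map_cons, List.sum_cons]
    refine (add_le_add_iff_left _).2 (ih hnd.of_cons ?_ ?_)
    · intro x hx
      refine (List.mem_erase_of_ne (fun h => (List.nodup_cons.1 hnd).1 ?_)).2
        (hsub (List.mem_cons_of_mem a hx))
      rwa [h] at hx
    · intro x hx; exact hf x (List.erase_subset hx)

variable {X : Type*} [DecidableEq X] {G : SimpleGraph X} {w : X → X → ℝ}
lemma walkLength_nil (w : X → X → ℝ) (x : X) :
    walkLength w (SimpleGraph.Walk.nil : G.Walk x x) = 0 := by simp [walkLength]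

lemma walkLength_cons (w : X → X → ℝ) {x y z : X} (h : G.Adj x y) (p : G.Walk y z) :
    walkLength w (SimpleGraph.Walk.cons h p) = w x y + walkLength w p := by
  simp [walkLength]

lemma walkLength_append (w : X → X → ℝ) {x y z : X} (p : G.Walk x y) (q : G.Walk y z) :
    walkLength w (p.append q) = walkLength w p + walkLength w q := by
  simp [walkLength]

lemma walkLength_concat (w : X → X → ℝ) {x y z : X} (p : G.Walk x y) (h : G.Adj y z) :
    walkLength w (p.concat h) = walkLength w p + w y z := by
  simp [walkLength]

lemma walkLength_reverse (hw_symm : ∀ x y, w x y = w y x) {x y : X} (p : G.Walk x y) :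
    walkLength w p.reverse = walkLength w p := by
  simp only [walkLength, SimpleGraph.Walk.darts_reverse, List.map_reverse, List.sum_reverse,
    List.map_map]
  congr 1
  ext d
  simp [SimpleGraph.Dart.symm, hw_symm]

lemma walkLength_nonneg (hw : ∀ x y, 0 ≤ w x y) {x y : X} (p : G.Walk x y) :
    0 ≤ walkLength w p :=
  List.sum_nonneg (by rintro a ha; simp only [List.mem_map] at ha; obtain ⟨d, _, rfl⟩ := ha
                      exact hw _ _)


noncomputable def P (hT : G.IsTree) (a b : X) : G.Walk a b :=
  (hT.existsUnique_path a b).choose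

lemma P_isPath (hT : G.IsTree) (a b : X) : (P hT a b).IsPath :=
  (hT.existsUnique_path a b).choose_spec.1

lemma P_unique (hT : G.IsTree) {a b : X} {q : G.Walk a b} (hq : q.IsPath) :
    q = P hT a b :=
  (hT.existsUnique_path a b).choose_spec.2 q hq

lemma P_nil (hT : G.IsTree) (a : X) : P hT a a = SimpleGraph.Walk.nil :=
  (P_unique hT SimpleGraph.Walk.IsPath.nil).symm

lemma P_reverse (hT : G.IsTree) (a b : X) : P hT b a = (P hT a b).reverse :=
  (P_unique hT ((SimpleGraph.Walk.isPath_reverse_iff _).2 (P_isPath hT a b))).symm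

lemma takeUntil_eq (hT : G.IsTree) {a b c : X} (h : c ∈ (P hT a b).support) :
    (P hT a b).takeUntil c h = P hT a c :=
  P_unique hT ((P_isPath hT a b).takeUntil h)

lemma dropUntil_eq (hT : G.IsTree) {a b c : X} (h : c ∈ (P hT a b).support) :
    (P hT a b).dropUntil c h = P hT c b :=
  P_unique hT ((P_isPath hT a b).dropUntil h)

section dist
variable [MetricSpace X] (hT : G.IsTree) (hw_nonneg : ∀ x y, 0 ≤ w x y)
  (hdist : ∀ x y : X, dist x y = sInf {L : ℝ | ∃ q : G.Walk x y, L = walkLength w q})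

include hT hw_nonneg hdist

lemma dist_eq (a b : X) : dist a b = walkLength w (P hT a b) := by
  rw [hdist a b]
  have hmem : walkLength w (P hT a b) ∈ {L : ℝ | ∃ q : G.Walk a b, L = walkLength w q} :=
    ⟨P hT a b, rfl⟩
  have hlb : ∀ L ∈ {L : ℝ | ∃ q : G.Walk a b, L = walkLength w q},
      walkLength w (P hT a b) ≤ L := by
    rintro L ⟨q, rfl⟩
    have hbp : q.bypass = P hT a b := P_unique hT q.bypass_isPath
    have hnd : q.bypass.darts.Nodup :=
      (q.bypass_isPath.isTrail.edges_nodup).of_map _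
    calc walkLength w (P hT a b) = walkLength w q.bypass := by rw [hbp]
      _ ≤ walkLength w q :=
        list_sum_map_le hnd q.darts_bypass_subset
          (fun d _ => hw_nonneg d.toProd.1 d.toProd.2)
  exact le_antisymm (csInf_le ⟨0, fun L hL => by
      obtain ⟨q, rfl⟩ := hL; exact walkLength_nonneg hw_nonneg q⟩ hmem)
    (le_csInf ⟨_, hmem⟩ hlb)

lemma dist_split {a b c : X} (h : c ∈ (P hT a b).support) :
    dist a b = dist a c + dist c b := by
  rw [dist_eq hT hw_nonneg hdist, dist_eq hT hw_nonneg hdist,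
    dist_eq hT hw_nonneg hdist,
    ← takeUntil_eq hT h, ← dropUntil_eq hT h,
    ← walkLength_append w _ _, (P hT a b).take_spec h]

end dist

lemma mem_of_mem_P_left (hT : G.IsTree) {a b c u : X} (h : c ∈ (P hT a b).support)
    (hu : u ∈ (P hT a c).support) : u ∈ (P hT a b).support := by
  rw [← takeUntil_eq hT h] at hu
  exact (P hT a b).support_takeUntil_subset h hu

lemma mem_of_mem_P_right (hT : G.IsTree) {a b c u : X} (h : c ∈ (P hT a b).support)
    (hu : u ∈ (P hT c b).support) : u ∈ (P hT a b).support := by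
  rw [← dropUntil_eq hT h] at hu
  exact (P hT a b).support_dropUntil_subset h hu

/-- If `z` is on the path from `r` to `a` but not on the path from `r` to `b`,
then `z` is on the path from `a` to `b`. -/
lemma mem_P_of_not_mem (hT : G.IsTree) {r a b z : X} (ha : z ∈ (P hT r a).support)
    (hb : z ∉ (P hT r b).support) : z ∈ (P hT a b).support := by
  have hbp : ((P hT r b).append (P hT b a)).bypass = P hT r a :=
    P_unique hT (SimpleGraph.Walk.bypass_isPath _)
  have hsub : z ∈ ((P hT r b).append (P hT b a)).support := by
    rw [← hbp] at ha
    exact SimpleGraph.Walk.support_bypass_subset _ ha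
  rw [SimpleGraph.Walk.support_append, List.mem_append] at hsub
  rcases hsub with h | h
  · exact absurd h hb
  · have : z ∈ (P hT b a).support := List.mem_of_mem_tail h
    rw [P_reverse hT a b, SimpleGraph.Walk.support_reverse, List.mem_reverse] at this
    exact this

lemma walk_cons_decomp {a b : X} (p : G.Walk a b) (hp : p.IsPath) (hab : a ≠ b) :
    ∃ (c : X) (h : G.Adj a c) (q : G.Walk c b),
      p = SimpleGraph.Walk.cons h q ∧ q.IsPath ∧ a ∉ q.support := by
  cases p with
  | nil => exact absurd rfl hab
  | cons h q =>
    rw [SimpleGraph.Walk.cons_isPath_iff] at hp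
    exact ⟨_, h, q, rfl, hp.1, hp.2⟩

lemma P_concat (hT : G.IsTree) {o v c : X} (h : G.Adj v c)
    (hc : c ∉ (P hT o v).support) :
    P hT o c = (P hT o v).concat h := by
  refine (P_unique hT ?_).symm
  rw [← SimpleGraph.Walk.isPath_reverse_iff, SimpleGraph.Walk.reverse_concat]
  rw [SimpleGraph.Walk.cons_isPath_iff]
  refine ⟨(SimpleGraph.Walk.isPath_reverse_iff _).2 (P_isPath hT o v), ?_⟩
  simpa [SimpleGraph.Walk.support_reverse] using hc

section step

variable [MetricSpace X] (hT : G.IsTree) (hw_nonneg : ∀ x y, 0 ≤ w x y)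
  (hdist : ∀ x y : X, dist x y = sInf {L : ℝ | ∃ q : G.Walk x y, L = walkLength w q})
  (o : X) (ξ : UniformSpace.Completion X)
  (hξ : ξ ∉ Set.range ((↑) : X → UniformSpace.Completion X))
  (y : ℕ → X) (hy : ∀ ε > (0:ℝ), ∃ K, ∀ k ≥ K, dist (y k : UniformSpace.Completion X) ξ < ε)

include hT hw_nonneg hdist hξ hy

lemma step (v : X) (K : ℕ) (hv : ∀ k ≥ K, v ∈ (P hT o (y k)).support) :
    ∃ (c : X) (K' : ℕ), G.Adj v c ∧ c ∉ (P hT o v).support ∧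
      (∃ h : G.Adj v c, P hT o c = (P hT o v).concat h) ∧
      ∀ k ≥ K', c ∈ (P hT o (y k)).support := by
  set δ := dist (v : UniformSpace.Completion X) ξ with hδdef
  have hδ : 0 < δ := by
    rw [hδdef, dist_pos]
    exact fun h => hξ ⟨v, h⟩
  obtain ⟨K₁, hK₁⟩ := hy (δ/4) (by linarith)
  set K' := max K K₁ with hK'def
  have hKK' : K ≤ K' := le_max_left _ _
  have hK₁K' : K₁ ≤ K' := le_max_right _ _
  -- for k ≥ K', dist v (y k) > 3δ/4
  have hfar : ∀ k ≥ K', (3*δ/4) < dist v (y k) := by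
    intro k hk
    have h1 : dist (y k : UniformSpace.Completion X) ξ < δ/4 := hK₁ k (le_trans hK₁K' hk)
    have h2 : δ ≤ dist (v : UniformSpace.Completion X) (y k : UniformSpace.Completion X)
        + dist (y k : UniformSpace.Completion X) ξ := by
      rw [hδdef]; exact dist_triangle _ _ _
    have h3 : dist (v : UniformSpace.Completion X) (y k : UniformSpace.Completion X)
        = dist v (y k) := UniformSpace.Completion.dist_eq v (y k)
    linarith
  have hvne : v ≠ y K' := by
    intro h
    have := hfar K' le_rfl
    rw [← h, dist_self] at this
    linarith
  obtain ⟨c, hadj, q, hq, hqp, hvq⟩ :=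
    walk_cons_decomp (P hT v (y K')) (P_isPath hT v (y K')) hvne
  have hqP : q = P hT c (y K') := P_unique hT hqp
  subst hqP
  have hvK' : v ∈ (P hT o (y K')).support := hv K' hKK'
  -- c is not on the path from o to v
  have hnodup := (P_isPath hT o (y K')).support_nodup
  have hspec := (P hT o (y K')).take_spec hvK'
  rw [takeUntil_eq hT hvK', dropUntil_eq hT hvK'] at hspec
  have hsupp : (P hT o (y K')).support
      = (P hT o v).support ++ (P hT v (y K')).support.tail := by
    rw [← hspec, SimpleGraph.Walk.support_append]
  have hctail : c ∈ (P hT v (y K')).support.tail := by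
    rw [hq, SimpleGraph.Walk.support_cons]
    exact (P hT c (y K')).start_mem_support
  have hcv : c ∉ (P hT o v).support := by
    rw [hsupp] at hnodup
    intro hmem
    exact (List.disjoint_of_nodup_append hnodup) hmem hctail
  have hcK' : c ∈ (P hT o (y K')).support := by
    rw [hsupp]
    exact List.mem_append_right _ hctail
  refine ⟨c, K', hadj, hcv, ⟨hadj, P_concat hT hadj hcv⟩, ?_⟩
  intro k hk
  by_contra hc
  -- then the path from y K' to y k passes through v, which is too far from ξ
  have h1 : c ∈ (P hT (y K') (y k)).support := mem_P_of_not_mem hT hcK' hc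
  have h2 : c ∉ (P hT v (y k)).support := by
    intro hmem
    exact hc (mem_of_mem_P_right hT (hv k (le_trans hKK' hk)) hmem)
  have h3 : P hT c (y k) = SimpleGraph.Walk.cons hadj.symm (P hT v (y k)) := by
    refine (P_unique hT ?_).symm
    rw [SimpleGraph.Walk.cons_isPath_iff]
    exact ⟨P_isPath hT v (y k), h2⟩
  have h4 : v ∈ (P hT c (y k)).support := by
    rw [h3, SimpleGraph.Walk.support_cons]
    exact List.mem_cons_of_mem _ (P hT v (y k)).start_mem_support
  have h5 : v ∈ (P hT (y K') (y k)).support := mem_of_mem_P_right hT h1 h4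
  have h6 : dist (y K') (y k) = dist (y K') v + dist v (y k) :=
    dist_split hT hw_nonneg hdist h5
  have h7 : (3*δ/4) < dist (y K') v := by
    rw [dist_comm]; exact hfar K' le_rfl
  have h8 : (3*δ/4) < dist v (y k) := hfar k hk
  have h9 : dist (y K') (y k)
      ≤ dist (y K' : UniformSpace.Completion X) ξ + dist (y k : UniformSpace.Completion X) ξ := by
    rw [← UniformSpace.Completion.dist_eq]
    exact dist_triangle_right _ _ _
  have h10 := hK₁ K' hK₁K'
  have h11 := hK₁ k (le_trans hK₁K' hk)
  linarith

end step

end TBMP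

open TBMP UniformSpace

/-- On a connected locally finite tree with path metric `d_w`, every point of the
metric boundary is the limit of an infinite injective path `(x_n)` such that `x_m`
is an ancestor of `x_n` for `m ≤ n` (every walk from `x_n` to the root passes through
`x_m`); in particular `d_w(x_n, x_m) = ∑_{k=m}^{n-1} w(x_k, x_{k+1})` for `n > m`. -/
theorem tree_boundary_monotone_path {X : Type*} [Countable X] [MetricSpace X]
    (G : SimpleGraph X) (hT : G.IsTree) (hlf : ∀ x : X, (G.neighborSet x).Finite)
    (o : X) (w : X → X → ℝ) (hw_symm : ∀ x y, w x y = w y x)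
    (hw_nonneg : ∀ x y, 0 ≤ w x y) (hw_pos : ∀ x y, G.Adj x y → 0 < w x y)
    (hdist : ∀ x y : X, dist x y = sInf {L : ℝ | ∃ q : G.Walk x y, L = walkLength w q})
    (ξ : UniformSpace.Completion X)
    (hξ : ξ ∉ Set.range ((↑) : X → UniformSpace.Completion X)) :
    ∃ x : ℕ → X, Function.Injective x ∧ (∀ n, G.Adj (x n) (x (n + 1))) ∧
      Tendsto (fun n => ((x n : UniformSpace.Completion X))) atTop (𝓝 ξ) ∧
      (∀ m n : ℕ, m ≤ n → ∀ q : G.Walk (x n) o, x m ∈ q.support) ∧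
      (∀ m n : ℕ, m < n → dist (x n) (x m) = ∑ k ∈ Finset.Ico m n, w (x k) (x (k + 1))) := by
  classical
  -- a sequence in X approaching ξ
  have hy0 : ∀ n : ℕ, ∃ a : X, dist (a : Completion X) ξ < 1/(n+1) := by
    intro n
    have hpos : (0:ℝ) < 1/(n+1) := by positivity
    obtain ⟨a, ha⟩ := (Metric.denseRange_iff.1 Completion.denseRange_coe) ξ _ hpos
    exact ⟨a, by rwa [dist_comm]⟩
  choose y hy0 using hy0
  have hy : ∀ ε > (0:ℝ), ∃ K, ∀ k ≥ K, dist (y k : Completion X) ξ < ε := by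
    intro ε hε
    obtain ⟨K, hK⟩ := exists_nat_one_div_lt hε
    refine ⟨K, fun k hk => lt_of_lt_of_le (hy0 k) (le_trans ?_ (le_of_lt hK))⟩
    have h1 : (0:ℝ) < (K:ℝ)+1 := by positivity
    have h2 : ((K:ℝ)+1) ≤ (k:ℝ)+1 := by
      have := (Nat.cast_le (α := ℝ)).2 hk; linarith
    exact one_div_le_one_div_of_le h1 h2
  -- recursive construction of the branch
  have key : ∀ s : {p : X × ℕ // ∀ k ≥ p.2, p.1 ∈ (P hT o (y k)).support},
      ∃ t : {p : X × ℕ // ∀ k ≥ p.2, p.1 ∈ (P hT o (y k)).support},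
        (∃ h : G.Adj s.1.1 t.1.1, P hT o t.1.1 = (P hT o s.1.1).concat h) ∧
          t.1.1 ∉ (P hT o s.1.1).support := by
    rintro ⟨⟨v, K⟩, hv⟩
    obtain ⟨c, K', hadj, hcv, hconc, hstep⟩ :=
      TBMP.step hT hw_nonneg hdist o ξ hξ y hy v K hv
    exact ⟨⟨(c, K'), hstep⟩, hconc, hcv⟩
  choose f hf1 hf2 using key
  let g : ℕ → {p : X × ℕ // ∀ k ≥ p.2, p.1 ∈ (P hT o (y k)).support} := fun n =>
    Nat.rec ⟨(o, 0), fun k _ => (P hT o (y k)).start_mem_support⟩ (fun _ s => f s) n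
  set x : ℕ → X := fun n => (g n).1.1 with hxdef
  have hx0 : x 0 = o := rfl
  have hconc : ∀ n, ∃ h : G.Adj (x n) (x (n+1)),
      P hT o (x (n+1)) = (P hT o (x n)).concat h := fun n => hf1 (g n)
  have hnot : ∀ n, x (n+1) ∉ (P hT o (x n)).support := fun n => hf2 (g n)
  have hadj : ∀ n, G.Adj (x n) (x (n+1)) := fun n => (hconc n).choose
  have hKmem : ∀ n, ∀ k ≥ (g n).1.2, x n ∈ (P hT o (y k)).support := fun n => (g n).2
  have hsupp : ∀ n, (P hT o (x (n+1))).support = (P hT o (x n)).support ++ [x (n+1)] := by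
    intro n
    obtain ⟨h, hc⟩ := hconc n
    rw [hc, SimpleGraph.Walk.support_concat]
  have hmono : ∀ m n, m ≤ n → (P hT o (x m)).support ⊆ (P hT o (x n)).support := by
    intro m n hmn
    induction n, hmn using Nat.le_induction with
    | base => exact fun a ha => ha
    | succ n hn ih =>
      intro a ha
      rw [hsupp n]
      exact List.mem_append_left _ (ih ha)
  have hmem : ∀ m n, m ≤ n → x m ∈ (P hT o (x n)).support := fun m n hmn =>
    hmono m n hmn (P hT o (x m)).end_mem_support
  have hne : ∀ m n, m < n → x m ≠ x n := by
    intro m n hmn heq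
    obtain ⟨n', rfl⟩ := Nat.exists_eq_add_of_lt hmn
    have h1 : x m ∈ (P hT o (x (m + n'))).support := hmem m (m+n') (Nat.le_add_right _ _)
    rw [heq] at h1
    exact hnot (m+n') h1
  have hinj : Function.Injective x := by
    intro a b hab
    rcases lt_trichotomy a b with h | h | h
    · exact absurd hab (hne a b h)
    · exact h
    · exact absurd hab.symm (hne b a h)
  -- ancestor property
  have hanc : ∀ m n, m ≤ n → ∀ q : G.Walk (x n) o, x m ∈ q.support := by
    intro m n hmn q
    have hbp : q.reverse.bypass = P hT o (x n) :=
      P_unique hT q.reverse.bypass_isPath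
    have h1 : x m ∈ q.reverse.support := by
      have h0 := hmem m n hmn
      rw [← hbp] at h0
      exact q.reverse.support_bypass_subset h0
    rwa [SimpleGraph.Walk.support_reverse, List.mem_reverse] at h1
  -- distance sum formula
  have hd1 : ∀ n, dist o (x (n+1)) = dist o (x n) + w (x n) (x (n+1)) := by
    intro n
    obtain ⟨h, hc⟩ := hconc n
    rw [dist_eq hT hw_nonneg hdist, dist_eq hT hw_nonneg hdist, hc, walkLength_concat]
  have hd2 : ∀ m n, m ≤ n → dist (x m) (x (n+1)) = dist (x m) (x n) + w (x n) (x (n+1)) := by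
    intro m n hmn
    have e1 := dist_split hT hw_nonneg hdist (hmem m n hmn)
    have e2 := dist_split hT hw_nonneg hdist (hmem m (n+1) (le_trans hmn (Nat.le_succ n)))
    have e3 := hd1 n
    linarith
  have hsum : ∀ m n, m ≤ n → dist (x m) (x n) = ∑ k ∈ Finset.Ico m n, w (x k) (x (k+1)) := by
    intro m n hmn
    induction n, hmn using Nat.le_induction with
    | base => simp
    | succ n hn ih => rw [hd2 m n hn, ih, Finset.sum_Ico_succ_top hn]
  -- x n lies on the path from x m to y k (for suitable k)
  have hxy : ∀ m n, m ≤ n → ∀ k, (g m).1.2 ≤ k → (g n).1.2 ≤ k →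
      x n ∈ (P hT (x m) (y k)).support := by
    intro m n hmn k hkm hkn
    rcases eq_or_lt_of_le hmn with rfl | hlt
    · exact (P hT (x m) (y k)).start_mem_support
    · obtain ⟨n', rfl⟩ := Nat.exists_eq_add_of_lt hlt
      have hnm : x (m + n' + 1) ∉ (P hT o (x m)).support := by
        intro hmem'
        exact hnot (m+n') (hmono m (m+n') (Nat.le_add_right _ _) hmem')
      have hko : x m ∈ (P hT o (y k)).support := hKmem m k hkm
      have hkn' : x (m + n' + 1) ∈ (P hT o (y k)).support := hKmem (m + n' + 1) k hkn
      have hspec := (P hT o (y k)).take_spec hko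
      rw [takeUntil_eq hT hko, dropUntil_eq hT hko] at hspec
      have hsupp' : (P hT o (y k)).support
          = (P hT o (x m)).support ++ (P hT (x m) (y k)).support.tail := by
        rw [← hspec, SimpleGraph.Walk.support_append]
      rw [hsupp', List.mem_append] at hkn'
      rcases hkn' with h | h
      · exact absurd h hnm
      · exact List.mem_of_mem_tail h
  -- the distance to ξ is antitone along the branch
  have hDanti : ∀ m n, m ≤ n →
      dist (x n : Completion X) ξ ≤ dist (x m : Completion X) ξ := by
    intro m n hmn
    refine le_of_forall_pos_le_add ?_
    intro ε hε
    obtain ⟨K, hK⟩ := hy (ε/2) (by linarith)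
    set k := max K (max (g m).1.2 (g n).1.2) with hk
    have hkK : K ≤ k := le_max_left _ _
    have hkm : (g m).1.2 ≤ k := le_trans (le_max_left _ _) (le_max_right _ _)
    have hkn : (g n).1.2 ≤ k := le_trans (le_max_right _ _) (le_max_right _ _)
    have h1 := hxy m n hmn k hkm hkn
    have h2 : dist (x m) (y k) = dist (x m) (x n) + dist (x n) (y k) :=
      dist_split hT hw_nonneg hdist h1
    have h3 : dist (x n) (y k) ≤ dist (x m) (y k) := by
      have := dist_nonneg (x := x m) (y := x n); linarith
    have h4 : dist (x n : Completion X) ξ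
        ≤ dist (x n) (y k) + dist (y k : Completion X) ξ := by
      rw [← UniformSpace.Completion.dist_eq (x n) (y k)]
      exact dist_triangle _ _ _
    have h5 : dist (x m) (y k)
        ≤ dist (x m : Completion X) ξ + dist (y k : Completion X) ξ := by
      rw [← UniformSpace.Completion.dist_eq (x m) (y k)]
      exact dist_triangle_right _ _ _
    have h6 := hK k hkK
    linarith
  -- distance to ξ gets arbitrarily small
  have hsmall : ∀ ε > (0:ℝ), ∃ N, dist (x N : Completion X) ξ < ε := by
    intro ε hε
    obtain ⟨K, hK⟩ := hy (ε/4) (by linarith)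
    set k := max K (g 0).1.2 with hkdef
    have hkK : K ≤ k := le_max_left _ _
    set A : Set ℕ := {n | x n ∈ (P hT o (y k)).support} with hA
    have hA0 : 0 ∈ A := by
      show x 0 ∈ (P hT o (y k)).support
      rw [hx0]; exact (P hT o (y k)).start_mem_support
    have hAfin : A.Finite := by
      have : A = x ⁻¹' {a | a ∈ (P hT o (y k)).support} := rfl
      rw [this]
      exact Set.Finite.preimage (Set.injOn_of_injective hinj)
        ((P hT o (y k)).support.finite_toSet)
    have hAne : hAfin.toFinset.Nonempty := ⟨0, hAfin.mem_toFinset.2 hA0⟩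
    set N := hAfin.toFinset.max' hAne with hNdef
    have hNA : N ∈ A := hAfin.mem_toFinset.1 (hAfin.toFinset.max'_mem hAne)
    have hNmax : ∀ a ∈ A, a ≤ N := fun a ha =>
      hAfin.toFinset.le_max' a (hAfin.mem_toFinset.2 ha)
    have hnotin : x (N+1) ∉ (P hT o (y k)).support := by
      intro h
      exact absurd (hNmax (N+1) h) (by omega)
    set k' := max K (max (g (N+1)).1.2 (g N).1.2) with hk'def
    have hk'K : K ≤ k' := le_max_left _ _
    have hk'N1 : (g (N+1)).1.2 ≤ k' := le_trans (le_max_left _ _) (le_max_right _ _)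
    have h1 : x (N+1) ∈ (P hT o (y k')).support := hKmem (N+1) k' hk'N1
    have h2 : x (N+1) ∈ (P hT (y k') (y k)).support := mem_P_of_not_mem hT h1 hnotin
    have hNk : x N ∈ (P hT o (y k)).support := hNA
    have h3 : x (N+1) ∉ (P hT (x N) (y k)).support := by
      intro hmem'
      exact hnotin (mem_of_mem_P_right hT hNk hmem')
    have h4 : P hT (x (N+1)) (y k) = SimpleGraph.Walk.cons (hadj N).symm (P hT (x N) (y k)) := by
      refine (P_unique hT ?_).symm
      rw [SimpleGraph.Walk.cons_isPath_iff]
      exact ⟨P_isPath hT (x N) (y k), h3⟩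
    have h5 : x N ∈ (P hT (x (N+1)) (y k)).support := by
      rw [h4, SimpleGraph.Walk.support_cons]
      exact List.mem_cons_of_mem _ (P hT (x N) (y k)).start_mem_support
    have h6 : x N ∈ (P hT (y k') (y k)).support := mem_of_mem_P_right hT h2 h5
    have h7 : dist (y k') (y k) = dist (y k') (x N) + dist (x N) (y k) :=
      dist_split hT hw_nonneg hdist h6
    have h8 : dist (y k') (y k)
        ≤ dist (y k' : Completion X) ξ + dist (y k : Completion X) ξ := by
      rw [← UniformSpace.Completion.dist_eq (y k') (y k)]
      exact dist_triangle_right _ _ _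
    have h9 : dist (x N : Completion X) ξ
        ≤ dist (x N) (y k) + dist (y k : Completion X) ξ := by
      rw [← UniformSpace.Completion.dist_eq (x N) (y k)]
      exact dist_triangle _ _ _
    have h10 := hK k hkK
    have h11 := hK k' hk'K
    have h12 : 0 ≤ dist (y k') (x N) := dist_nonneg
    exact ⟨N, by linarith⟩
  have htend : Tendsto (fun n => ((x n : Completion X))) atTop (𝓝 ξ) := by
    rw [Metric.tendsto_atTop]
    intro ε hε
    obtain ⟨N, hN⟩ := hsmall ε hε
    exact ⟨N, fun n hn => lt_of_le_of_lt (hDanti N n hn) hN⟩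
  exact ⟨x, hinj, hadj, htend, fun m n hmn q => hanc m n hmn q,
    fun m n hmn => by rw [dist_comm]; exact hsum m n (le_of_lt hmn)⟩
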